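/- Let E and E₁ be finite-dimensional real inner product spaces, A : E → E₁ a surjective linear map, f ∈ E₁, and F := {v ∈ E : Av = f}. Let J : E → [0, ∞), and suppose there are 0 < ω₀ < ω such that v ↦ J(v) + ω₀‖v‖² is convex (so that for every u ∈ E the function J_{ω,u}(v) := J(v) + ω‖v − u‖² is 2(ω − ω₀)-strongly convex and coercive, hence has a unique minimizer on F). Let (v_ℓ)_{ℓ≥0} be a sequence in E and, for ℓ ≥ 1, let v̄_ℓ be the unique minimizer of J_{ω,v_{ℓ-1}} on F. Assume there exist constants C₁, C₂ ≥ 0 and α > 1 such that ‖v_ℓ − v̄_ℓ‖² ≤ (C₁ + C₂ J_{ω,v_{ℓ-1}}(v̄_ℓ)) ℓ^{−α} for all ℓ ≥ 1. Then: (i) v_ℓ − v_{ℓ-1} → 0 as ℓ → ∞; (ii) the sequence (J(v̄_ℓ))_{ℓ≥1} converges; (iii) if (v_ℓ) is bounded, then (J(v_ℓ))_{ℓ≥1} converges; (iv) if J is coercive on F (i.e., J(w_n) → ∞ for every sequence (w_n) in F with ‖w_n‖ → ∞), then (v_ℓ) is bounded. -/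

import Mathlib

open Filter

private lemma aux_prod_bound (a r : ℕ → ℝ) (hr : ∀ n, 0 ≤ r n) (ha : ∀ n, 1 ≤ a n)
    (hrec : ∀ n, a (n+1) ≤ a n * (1 + r n)) (T : ℝ)
    (hT : ∀ n, ∑ k ∈ Finset.range n, r k ≤ T) :
    ∀ n, a n ≤ a 0 * Real.exp T := by
  have ha0 : (0:ℝ) < a 0 := lt_of_lt_of_le one_pos (ha 0)
  have key : ∀ n, a n ≤ a 0 * Real.exp (∑ k ∈ Finset.range n, r k) := by
    intro n
    induction n with
    | zero => simp
    | succ n ih =>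
      have h1 : 1 + r n ≤ Real.exp (r n) := by
        linarith [Real.add_one_le_exp (r n)]
      calc a (n+1) ≤ a n * (1 + r n) := hrec n
        _ ≤ (a 0 * Real.exp (∑ k ∈ Finset.range n, r k)) * Real.exp (r n) := by
            apply mul_le_mul ih h1 (by linarith [hr n]) (by positivity)
        _ = a 0 * Real.exp (∑ k ∈ Finset.range (n+1), r k) := by
            rw [Finset.sum_range_succ, Real.exp_add]; ring
  intro n
  exact (key n).trans (mul_le_mul_of_nonneg_left (Real.exp_le_exp.2 (hT n)) ha0.le)

private lemma tendsto_of_normsq_le {E : Type*} [NormedAddCommGroup E]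
    (x : ℕ → E) (t : ℕ → ℝ) (h : ∀ n, ‖x n‖^2 ≤ t n)
    (ht : Tendsto t atTop (nhds 0)) :
    Tendsto x atTop (nhds 0) := by
  rw [tendsto_zero_iff_norm_tendsto_zero]
  have h2 : Tendsto (fun n => ‖x n‖^2) atTop (nhds 0) :=
    squeeze_zero (fun n => sq_nonneg _) h ht
  have h3 := (Real.continuous_sqrt.tendsto 0).comp h2
  simpa [Function.comp_def, Real.sqrt_sq (norm_nonneg _)] using h3

private lemma aux_fejer (B D Efn : ℕ → ℝ) (hB0 : ∀ n, 0 ≤ B n) (hD0 : ∀ n, 0 ≤ D n)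
    (hE0 : ∀ n, 0 ≤ Efn n) (hE : Summable Efn)
    (hBD : ∀ n, B (n+1) + D n ≤ B n + Efn n) :
    Summable D ∧ ∃ L : ℝ, Tendsto B atTop (nhds L) := by
  constructor
  · apply summable_of_sum_range_le (c := B 0 + ∑' k, Efn k) hD0
    intro n
    have htel : ∑ k ∈ Finset.range n, D k ≤ B 0 - B n + ∑ k ∈ Finset.range n, Efn k := by
      induction n with
      | zero => simp
      | succ n ih =>
        rw [Finset.sum_range_succ, Finset.sum_range_succ]
        have := hBD n; linarith
    have h2 : ∑ k ∈ Finset.range n, Efn k ≤ ∑' k, Efn k :=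
      Summable.sum_le_tsum (Finset.range n) (fun i _ => hE0 i) hE
    have := hB0 n
    exact htel.trans (by linarith)
  · set t : ℕ → ℝ := fun n => ∑' k, Efn (k + n) with htdef
    have hts : ∀ n, Summable fun k => Efn (k + n) := fun n => (summable_nat_add_iff n).mpr hE
    have ht0 : ∀ n, 0 ≤ t n := fun n => tsum_nonneg (fun k => hE0 _)
    have hsplit : ∀ n, t n = Efn n + t (n+1) := by
      intro n
      have h := Summable.tsum_eq_zero_add (hts n)
      simp only [zero_add] at h
      rw [htdef]
      simp only []
      rw [h]
      congr 1
      exact tsum_congr fun k => by rw [show k + 1 + n = k + (n+1) by omega]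
    set g : ℕ → ℝ := fun n => B n + t n with hgdef
    have hganti : Antitone g := antitone_nat_of_succ_le (by
      intro n
      have h1 := hBD n
      have h2 := hsplit n
      have h3 := hD0 n
      simp only [hgdef]
      linarith)
    have hgbdd : BddBelow (Set.range g) := by
      refine ⟨0, ?_⟩
      rintro x ⟨n, rfl⟩
      exact add_nonneg (hB0 n) (ht0 n)
    have hgL : Tendsto g atTop (nhds (⨅ n, g n)) := tendsto_atTop_ciInf hganti hgbdd
    have htto : Tendsto t atTop (nhds 0) := tendsto_sum_nat_add Efn
    refine ⟨⨅ n, g n, ?_⟩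
    have := hgL.sub htto
    simpa [hgdef] using this

/-- Convergence properties of the outer loop of the algorithm: with
`J_{ω,u}(v) = J(v) + ω‖v − u‖²`, `v̄_ℓ` the minimizer of `J_{ω,v_{ℓ-1}}` on
`F = {Av = f}`, and the error bound `‖v_ℓ − v̄_ℓ‖² ≤ (C₁ + C₂ J_{ω,v_{ℓ-1}}(v̄_ℓ)) ℓ^{−α}`,
one has: (i) `v_ℓ − v_{ℓ−1} → 0`; (ii) `(J(v̄_ℓ))` converges; (iii) if `(v_ℓ)` is bounded
then `(J(v_ℓ))` converges; (iv) if `J` is coercive on `F` then `(v_ℓ)` is bounded. -/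
theorem statement5 {E E₁ : Type*}
    [NormedAddCommGroup E] [InnerProductSpace ℝ E] [FiniteDimensional ℝ E]
    [NormedAddCommGroup E₁] [InnerProductSpace ℝ E₁] [FiniteDimensional ℝ E₁]
    (A : E →ₗ[ℝ] E₁) (hA : Function.Surjective A) (f : E₁)
    (J : E → ℝ) (hJ0 : ∀ v, 0 ≤ J v)
    (ω₀ ω : ℝ) (hω₀ : 0 < ω₀) (hω₀ω : ω₀ < ω)
    (hconv : ConvexOn ℝ Set.univ (fun v => J v + ω₀ * ‖v‖ ^ 2))
    (v : ℕ → E) (vbar : ℕ → E)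
    (hvbarf : ∀ ℓ ≥ 1, A (vbar ℓ) = f)
    (hvbarmin : ∀ ℓ ≥ 1, ∀ w, A w = f →
      J (vbar ℓ) + ω * ‖vbar ℓ - v (ℓ - 1)‖ ^ 2 ≤ J w + ω * ‖w - v (ℓ - 1)‖ ^ 2)
    (C₁ C₂ α : ℝ) (hC₁ : 0 ≤ C₁) (hC₂ : 0 ≤ C₂) (hα : 1 < α)
    (herr : ∀ ℓ ≥ 1, ‖v ℓ - vbar ℓ‖ ^ 2 ≤
      (C₁ + C₂ * (J (vbar ℓ) + ω * ‖vbar ℓ - v (ℓ - 1)‖ ^ 2)) * (ℓ : ℝ) ^ (-α)) :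
    (Filter.Tendsto (fun ℓ => v (ℓ + 1) - v ℓ) Filter.atTop (nhds 0)) ∧
    (∃ L : ℝ, Filter.Tendsto (fun ℓ => J (vbar (ℓ + 1))) Filter.atTop (nhds L)) ∧
    (Bornology.IsBounded (Set.range v) →
      ∃ L : ℝ, Filter.Tendsto (fun ℓ => J (v ℓ)) Filter.atTop (nhds L)) ∧
    ((∀ w : ℕ → E, (∀ n, A (w n) = f) →
        Filter.Tendsto (fun n => ‖w n‖) Filter.atTop Filter.atTop →
        Filter.Tendsto (fun n => J (w n)) Filter.atTop Filter.atTop) →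
      Bornology.IsBounded (Set.range v)) := by
  have hω : 0 < ω := lt_trans hω₀ hω₀ω
  set m : ℕ → ℝ := fun n => J (vbar (n+1)) + ω * ‖vbar (n+1) - v n‖^2 with hm
  have hm0 : ∀ n, 0 ≤ m n := fun n => add_nonneg (hJ0 _) (by positivity)
  have hJle : ∀ n, J (vbar (n+1)) ≤ m n := fun n => le_add_of_nonneg_right (by positivity)
  have hp0 : ∀ n : ℕ, (0:ℝ) ≤ ((n+1:ℕ):ℝ)^(-α) := fun n => Real.rpow_nonneg (by positivity) _
  have herr' : ∀ n, ‖v (n+1) - vbar (n+1)‖^2 ≤ (C₁ + C₂ * m n) * ((n+1:ℕ):ℝ)^(-α) := by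
    intro n
    have h := herr (n+1) (by omega)
    simpa [hm] using h
  have hrec0 : ∀ n, m (n+1) ≤ J (vbar (n+1)) + ω * ‖v (n+1) - vbar (n+1)‖^2 := by
    intro n
    have h := hvbarmin (n+2) (by omega) (vbar (n+1)) (hvbarf (n+1) (by omega))
    simpa [hm, norm_sub_rev (vbar (n+1)) (v (n+1))] using h
  have hrec : ∀ n, m (n+1) + 1 ≤ (m n + 1) * (1 + (ω*(C₁+C₂)) * ((n+1:ℕ):ℝ)^(-α)) := by
    intro n
    have h1 := hrec0 n
    have h2 := herr' n
    have hp := hp0 n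
    have h3 : ω * ‖v (n+1) - vbar (n+1)‖^2 ≤ ω * ((C₁ + C₂ * m n) * ((n+1:ℕ):ℝ)^(-α)) :=
      mul_le_mul_of_nonneg_left h2 hω.le
    have h4 : (C₁ + C₂ * m n) ≤ (C₁ + C₂) * (m n + 1) := by nlinarith [hm0 n]
    have h5 : ω * ((C₁ + C₂ * m n) * ((n+1:ℕ):ℝ)^(-α)) ≤
        ω * ((C₁+C₂)*(m n+1) * ((n+1:ℕ):ℝ)^(-α)) :=
      mul_le_mul_of_nonneg_left (mul_le_mul_of_nonneg_right h4 hp) hω.le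
    nlinarith [hJle n]
  have hsum : Summable (fun n : ℕ => ((n+1:ℕ):ℝ)^(-α)) := by
    have h := Real.summable_nat_rpow.mpr (show -α < -1 by linarith)
    exact (summable_nat_add_iff 1).mpr h
  set T : ℝ := ∑' n : ℕ, ((n+1:ℕ):ℝ)^(-α) with hT
  set M : ℝ := (m 0 + 1) * Real.exp (ω*(C₁+C₂)*T) with hMdef
  have hM1 : ∀ n, m n + 1 ≤ M := by
    exact aux_prod_bound (fun n => m n + 1)
      (fun n => (ω*(C₁+C₂)) * ((n+1:ℕ):ℝ)^(-α))
      (fun n => mul_nonneg (by positivity) (hp0 n))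
      (fun n => by linarith [hm0 n])
      hrec (ω*(C₁+C₂)*T)
      (fun n => by
        rw [← Finset.mul_sum]
        refine mul_le_mul_of_nonneg_left ?_ (by positivity)
        exact Summable.sum_le_tsum (Finset.range n) (fun i _ => hp0 i) hsum)
  have hM0 : (1:ℝ) ≤ M := le_trans (by linarith [hm0 0]) (hM1 0)
  have hCM : 0 ≤ C₁ + C₂ * M := add_nonneg hC₁ (mul_nonneg hC₂ (by linarith))
  set Fp : ℕ → ℝ := fun n => (C₁ + C₂ * M) * ((n+1:ℕ):ℝ)^(-α) with hFpdef
  have hFp0 : ∀ n, 0 ≤ Fp n := fun n => mul_nonneg hCM (hp0 n)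
  have hFsum : Summable Fp := hsum.mul_left _
  have hFto : Tendsto Fp atTop (nhds 0) := hFsum.tendsto_atTop_zero
  have herrM : ∀ n, ‖v (n+1) - vbar (n+1)‖^2 ≤ Fp n := by
    intro n
    refine (herr' n).trans ?_
    refine mul_le_mul_of_nonneg_right ?_ (hp0 n)
    have := hM1 n
    nlinarith
  have hkey : ∀ n, J (vbar (n+2)) + ω * ‖vbar (n+2) - v (n+1)‖^2 ≤
      J (vbar (n+1)) + ω * Fp n := by
    intro n
    have h1 := hrec0 n
    have h2 := mul_le_mul_of_nonneg_left (herrM n) hω.le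
    simp only [hm] at h1
    linarith
  obtain ⟨hDsum, L, hL⟩ := aux_fejer (fun n => J (vbar (n+1)))
      (fun n => ω * ‖vbar (n+2) - v (n+1)‖^2) (fun n => ω * Fp n)
      (fun n => hJ0 _) (fun n => by positivity) (fun n => mul_nonneg hω.le (hFp0 n))
      (hFsum.mul_left ω) hkey
  have hx2 : Tendsto (fun n => v (n+1) - vbar (n+1)) atTop (nhds 0) :=
    tendsto_of_normsq_le _ Fp herrM hFto
  have hDto : Tendsto (fun n => ω * ‖vbar (n+2) - v (n+1)‖^2) atTop (nhds 0) :=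
    hDsum.tendsto_atTop_zero
  have hx1 : Tendsto (fun n => vbar (n+2) - v (n+1)) atTop (nhds 0) := by
    apply tendsto_of_normsq_le _ (fun n => ω * ‖vbar (n+2) - v (n+1)‖^2 / ω)
      (fun n => le_of_eq (mul_div_cancel_left₀ _ hω.ne').symm)
    simpa using hDto.div_const ω
  have hx2' : Tendsto (fun n => v (n+2) - vbar (n+2)) atTop (nhds 0) := by
    have := hx2.comp (tendsto_add_atTop_nat 1)
    simpa [Function.comp_def] using this
  have hgoal1 : Tendsto (fun ℓ => v (ℓ+1) - v ℓ) atTop (nhds 0) := by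
    rw [← tendsto_add_atTop_iff_nat (f := fun ℓ => v (ℓ+1) - v ℓ) 1]
    have := hx2'.add hx1
    simpa using this
  refine ⟨hgoal1, ⟨L, hL⟩, ?_, ?_⟩
  · -- part (iii)
    intro hbdd
    have hcont : Continuous J := by
      have h1 : Continuous fun x : E => J x + ω₀ * ‖x‖^2 := by
        rw [← continuousOn_univ]
        exact hconv.continuousOn isOpen_univ
      have h2 : Continuous fun x : E => ω₀ * ‖x‖^2 := continuous_const.mul ((continuous_norm).pow 2)
      have h3 : J = fun x => (J x + ω₀ * ‖x‖^2) - ω₀ * ‖x‖^2 := by funext x; ring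
      rw [h3]; exact h1.sub h2
    obtain ⟨R, hR⟩ := isBounded_iff_forall_norm_le.1 hbdd
    have hvR : ∀ n, ‖v n‖ ≤ R := fun n => hR _ ⟨n, rfl⟩
    have hsq0 : 0 ≤ Real.sqrt (M / ω) := Real.sqrt_nonneg _
    have hvbarR : ∀ n, ‖vbar (n+1)‖ ≤ R + Real.sqrt (M / ω) := by
      intro n
      have h1 : ω * ‖vbar (n+1) - v n‖^2 ≤ M := by
        have ha := hJ0 (vbar (n+1))
        have hb := hM1 n
        simp only [hm] at hb
        linarith
      have h2 : ‖vbar (n+1) - v n‖^2 ≤ M / ω := (le_div_iff₀' hω).mpr h1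
      have h3 : ‖vbar (n+1) - v n‖ ≤ Real.sqrt (M / ω) := by
        rw [show ‖vbar (n+1) - v n‖ = Real.sqrt (‖vbar (n+1) - v n‖^2) from
          (Real.sqrt_sq (norm_nonneg _)).symm]
        exact Real.sqrt_le_sqrt h2
      calc ‖vbar (n+1)‖ = ‖v n + (vbar (n+1) - v n)‖ := by rw [add_sub_cancel]
        _ ≤ ‖v n‖ + ‖vbar (n+1) - v n‖ := norm_add_le _ _
        _ ≤ R + Real.sqrt (M/ω) := add_le_add (hvR n) h3
    set K : Set E := Metric.closedBall (0:E) (R + Real.sqrt (M/ω)) with hKdef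
    have hK : IsCompact K := isCompact_closedBall _ _
    have hUC := hK.uniformContinuousOn_of_continuous hcont.continuousOn
    have hvK : ∀ n, v (n+1) ∈ K := by
      intro n
      rw [hKdef, mem_closedBall_zero_iff]
      linarith [hvR (n+1)]
    have hvbarK : ∀ n, vbar (n+1) ∈ K := by
      intro n
      rw [hKdef, mem_closedBall_zero_iff]
      exact hvbarR n
    have hdist : Tendsto (fun n => dist (v (n+1)) (vbar (n+1))) atTop (nhds 0) := by
      have := hx2.norm
      simpa [dist_eq_norm] using this
    have hdiff : Tendsto (fun n => J (v (n+1)) - J (vbar (n+1))) atTop (nhds 0) := by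
      rw [Metric.tendsto_atTop]
      intro ε hε
      obtain ⟨δ, hδ, hδ'⟩ := Metric.uniformContinuousOn_iff.1 hUC ε hε
      obtain ⟨N, hN⟩ := (Metric.tendsto_atTop.1 hdist δ hδ)
      refine ⟨N, fun n hn => ?_⟩
      have h := hδ' (v (n+1)) (hvK n) (vbar (n+1)) (hvbarK n) (by
        have := hN n hn
        simpa [Real.dist_eq] using this)
      rw [Real.dist_eq, sub_zero]
      rw [Real.dist_eq] at h
      exact h
    refine ⟨L, ?_⟩
    rw [← tendsto_add_atTop_iff_nat (f := fun ℓ => J (v ℓ)) 1]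
    have := hdiff.add hL
    simpa using this
  · -- part (iv)
    intro hcoer
    by_contra hnb
    rw [isBounded_iff_forall_norm_le] at hnb
    push_neg at hnb
    set c₀ : ℝ := Real.sqrt (C₁ + C₂ * M) with hc0def
    have hc0nn : 0 ≤ c₀ := Real.sqrt_nonneg _
    have hvc : ∀ n, ‖v (n+1) - vbar (n+1)‖ ≤ c₀ := by
      intro n
      have hple : ((n+1:ℕ):ℝ)^(-α) ≤ 1 :=
        Real.rpow_le_one_of_one_le_of_nonpos (by exact_mod_cast Nat.succ_le_succ (Nat.zero_le n))
          (by linarith)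
      have h1 : ‖v (n+1) - vbar (n+1)‖^2 ≤ C₁ + C₂ * M := by
        refine (herrM n).trans ?_
        simp only [hFpdef]
        nlinarith [hCM, hple]
      rw [show ‖v (n+1) - vbar (n+1)‖ = Real.sqrt (‖v (n+1) - vbar (n+1)‖^2) from
        (Real.sqrt_sq (norm_nonneg _)).symm]
      exact Real.sqrt_le_sqrt h1
    have hchoice : ∀ n : ℕ, ∃ ℓ : ℕ, (n:ℝ) + c₀ + ‖v 0‖ + 1 < ‖v ℓ‖ := by
      intro n
      obtain ⟨C, hC⟩ := hnb ((n:ℝ) + c₀ + ‖v 0‖ + 1)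
      obtain ⟨⟨ℓ, rfl⟩, hx⟩ := hC
      exact ⟨ℓ, hx⟩
    choose ℓf hℓf using hchoice
    have hℓ1 : ∀ n, 1 ≤ ℓf n := by
      intro n
      by_contra h
      push_neg at h
      have h0 : ℓf n = 0 := by omega
      have := hℓf n
      rw [h0] at this
      have hn0 : (0:ℝ) ≤ (n:ℝ) := Nat.cast_nonneg n
      linarith
    set w : ℕ → E := fun n => vbar (ℓf n) with hwdef
    have hwf : ∀ n, A (w n) = f := fun n => hvbarf _ (hℓ1 n)
    have hwn : ∀ n : ℕ, (n:ℝ) ≤ ‖w n‖ := by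
      intro n
      obtain ⟨k, hk⟩ := Nat.exists_eq_add_of_le (hℓ1 n)
      rw [add_comm] at hk
      have h1 : ‖v (ℓf n) - vbar (ℓf n)‖ ≤ c₀ := by rw [hk]; exact hvc k
      have h2 : ‖v (ℓf n)‖ - ‖vbar (ℓf n)‖ ≤ ‖v (ℓf n) - vbar (ℓf n)‖ := norm_sub_norm_le _ _
      have h3 := hℓf n
      have h4 : (0:ℝ) ≤ ‖v 0‖ := norm_nonneg _
      simp only [hwdef]
      linarith
    have hwto : Tendsto (fun n => ‖w n‖) atTop atTop :=
      tendsto_atTop_mono hwn tendsto_natCast_atTop_atTop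
    have hJw := hcoer w hwf hwto
    have hJwM : ∀ n, J (w n) ≤ M := by
      intro n
      obtain ⟨k, hk⟩ := Nat.exists_eq_add_of_le (hℓ1 n)
      rw [add_comm] at hk
      have h1 := hJle k
      have h2 := hM1 k
      simp only [hwdef]
      rw [hk]
      linarith
    obtain ⟨n, hn⟩ := (tendsto_atTop.1 hJw (M + 1)).exists
    linarith [hJwM n]
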